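/- Let α, β > 0 and let m, s be real with 0 < m + 1/β and 0 < s - m - 1/β. Then ∫₀^∞ log((x/α)^β) · ((x/α)^β)^m / (1 + (x/α)^β)^s dx = (α/β) · B(s - m - 1/β, m + 1/β) · [Ψ(m + 1/β) - Ψ(s - m - 1/β)]. -/

import Mathlib

open MeasureTheory Set

/-- The Beta function `B(a,b) = ∫₀¹ x^(a-1) (1-x)^(b-1) dx`. -/
noncomputable def Beta (a b : ℝ) : ℝ := ∫ x in Ioo (0:ℝ) 1, x ^ (a-1) * (1-x) ^ (b-1)

/-- The digamma function, the logarithmic derivative of the Gamma function. -/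
noncomputable def digamma (x : ℝ) : ℝ := deriv (fun y => Real.log (Real.Gamma y)) x

lemma cpow_eq_real {a b : ℝ} : ∀ x ∈ Ioc (0:ℝ) 1,
    (x:ℂ) ^ ((a:ℂ) - 1) * ((1:ℂ) - x) ^ ((b:ℂ) - 1)
      = ((x ^ (a-1) * (1-x) ^ (b-1) : ℝ) : ℂ) := by
  intro x hx
  have h1 : ((a:ℂ) - 1) = ((a - 1 : ℝ) : ℂ) := by push_cast; ring
  have h2 : ((b:ℂ) - 1) = ((b - 1 : ℝ) : ℂ) := by push_cast; ring
  have h3 : ((1:ℂ) - x) = ((1 - x : ℝ) : ℂ) := by push_cast; ring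
  rw [h1, h2, h3, ← Complex.ofReal_cpow hx.1.le, ← Complex.ofReal_cpow (by linarith [hx.2]),
    ← Complex.ofReal_mul]

lemma betaIntegrable {a b : ℝ} (ha : 0 < a) (hb : 0 < b) :
    IntegrableOn (fun x : ℝ => x ^ (a-1) * (1-x) ^ (b-1)) (Ioo (0:ℝ) 1) := by
  have h := (Complex.betaIntegral_convergent (u := (a:ℂ)) (v := (b:ℂ)) (by simpa) (by simpa))
  rw [intervalIntegrable_iff_integrableOn_Ioc_of_le zero_le_one] at h
  have h2 : IntegrableOn (fun x : ℝ => ((x ^ (a-1) * (1-x) ^ (b-1) : ℝ) : ℂ)) (Ioc (0:ℝ) 1) := by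
    exact h.congr_fun cpow_eq_real measurableSet_Ioc
  have h3 : IntegrableOn (fun x : ℝ => x ^ (a-1) * (1-x) ^ (b-1)) (Ioc (0:ℝ) 1) := by
    simpa [RCLike.re_to_complex, IntegrableOn] using h2.re
  exact h3.mono_set Ioo_subset_Ioc_self

lemma Beta_eq_Gamma {a b : ℝ} (ha : 0 < a) (hb : 0 < b) :
    Beta a b = Real.Gamma a * Real.Gamma b / Real.Gamma (a + b) := by
  have key : Complex.Gamma a * Complex.Gamma b
      = Complex.Gamma ((a:ℂ) + b) * Complex.betaIntegral a b :=
    Complex.Gamma_mul_Gamma_eq_betaIntegral (by simpa) (by simpa)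
  have hbeta : Complex.betaIntegral a b = ((Beta a b : ℝ) : ℂ) := by
    rw [Complex.betaIntegral, intervalIntegral.integral_of_le zero_le_one,
      setIntegral_congr_fun measurableSet_Ioc cpow_eq_real]
    rw [integral_Ioc_eq_integral_Ioo]
    exact integral_ofReal
  have hab : ((a:ℂ) + b) = ((a + b : ℝ) : ℂ) := by push_cast; ring
  rw [hbeta, hab, Complex.Gamma_ofReal, Complex.Gamma_ofReal, Complex.Gamma_ofReal,
    ← Complex.ofReal_mul, ← Complex.ofReal_mul] at key
  have := Complex.ofReal_inj.mp key
  rw [this]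
  field_simp [(Real.Gamma_pos_of_pos (by linarith : (0:ℝ) < a + b)).ne']

lemma abs_log_le {t c : ℝ} (ht : t ∈ Ioo (0:ℝ) 1) (hc : 0 < c) :
    |Real.log t| ≤ t ^ (-(c/2)) / (c/2) := by
  have h1 : |Real.log t| = Real.log (t ^ (-1 : ℝ)) := by
    rw [Real.rpow_neg_one, Real.log_inv, abs_of_nonpos (Real.log_nonpos ht.1.le ht.2.le)]
  rw [h1]
  have := Real.log_le_rpow_div (Real.rpow_nonneg ht.1.le (-1)) (by linarith : 0 < c/2)
  rwa [← Real.rpow_mul ht.1.le, show (-1 : ℝ) * (c/2) = -(c/2) by ring] at this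

lemma integrable_log_mul {c d : ℝ} (hc : 0 < c) (hd : 0 < d) :
    IntegrableOn (fun t : ℝ => Real.log t * (t ^ (c-1) * (1-t) ^ (d-1))) (Ioo (0:ℝ) 1) := by
  have hmeas : AEStronglyMeasurable
      (fun t : ℝ => Real.log t * (t ^ (c-1) * (1-t) ^ (d-1)))
      (volume.restrict (Ioo (0:ℝ) 1)) := by
    apply ContinuousOn.aestronglyMeasurable _ measurableSet_Ioo
    apply ContinuousOn.mul
    · exact Real.continuousOn_log.mono (fun t ht => ne_of_gt ht.1)
    · exact ((continuousOn_id.rpow_const fun t ht => Or.inl (ne_of_gt ht.1)).mul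
        ((continuousOn_const.sub continuousOn_id).rpow_const
          fun t ht => Or.inl (sub_ne_zero.mpr ht.2.ne')))
  refine Integrable.mono' ((betaIntegrable (by linarith : (0:ℝ) < c/2) hd).const_mul (2/c))
    hmeas ?_
  rw [ae_restrict_iff' measurableSet_Ioo]
  filter_upwards with t ht
  have h0 : (0:ℝ) < t := ht.1
  have h1 : t < 1 := ht.2
  have hrn : (0:ℝ) ≤ t ^ (c-1) * (1-t) ^ (d-1) :=
    mul_nonneg (Real.rpow_nonneg h0.le _) (Real.rpow_nonneg (by linarith) _)
  rw [norm_mul, Real.norm_eq_abs, Real.norm_eq_abs, abs_of_nonneg hrn]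
  have hb := abs_log_le ht hc
  have key : t ^ (-(c/2)) / (c/2) * (t ^ (c-1) * (1-t) ^ (d-1))
      = 2/c * (t ^ (c/2-1) * (1-t) ^ (d-1)) := by
    have hexp : t ^ (-(c/2)) * t ^ (c-1) = t ^ (c/2-1) := by
      rw [← Real.rpow_add h0]; congr 1; ring
    rw [← hexp]
    field_simp
  calc |Real.log t| * (t ^ (c-1) * (1-t) ^ (d-1))
      ≤ t ^ (-(c/2)) / (c/2) * (t ^ (c-1) * (1-t) ^ (d-1)) := by
        exact mul_le_mul_of_nonneg_right hb hrn
    _ = 2/c * (t ^ (c/2-1) * (1-t) ^ (d-1)) := key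

lemma reflect_integral (f : ℝ → ℝ) :
    ∫ t in Ioo (0:ℝ) 1, f (1-t) = ∫ t in Ioo (0:ℝ) 1, f t := by
  rw [← integral_Ioc_eq_integral_Ioo, ← integral_Ioc_eq_integral_Ioo,
    ← intervalIntegral.integral_of_le zero_le_one, ← intervalIntegral.integral_of_le zero_le_one,
    intervalIntegral.integral_comp_sub_left f 1]
  norm_num

lemma reflect_integrable {f : ℝ → ℝ} (hf : IntegrableOn f (Ioo (0:ℝ) 1)) :
    IntegrableOn (fun t => f (1-t)) (Ioo (0:ℝ) 1) := by
  have h : IntervalIntegrable f volume 0 1 := by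
    rw [intervalIntegrable_iff_integrableOn_Ioo_of_le zero_le_one]; exact hf
  have h2 := (h.comp_sub_left 1).symm
  norm_num at h2
  rw [intervalIntegrable_iff_integrableOn_Ioo_of_le zero_le_one] at h2
  exact h2

lemma integrable_log_one_sub_mul {c d : ℝ} (hc : 0 < c) (hd : 0 < d) :
    IntegrableOn (fun t : ℝ => Real.log (1-t) * (t ^ (c-1) * (1-t) ^ (d-1)))
      (Ioo (0:ℝ) 1) := by
  have h := reflect_integrable (integrable_log_mul hd hc)
  have : (fun t : ℝ => Real.log (1-t) * (t ^ (c-1) * (1-t) ^ (d-1)))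
      = (fun t : ℝ => Real.log (1-t) * ((1-t) ^ (d-1) * (1-(1-t)) ^ (c-1))) := by
    funext t; ring_nf
  rw [this]
  exact h

-- derivative in the exponent
lemma hasDerivAt_F {t b : ℝ} (ht : t ∈ Ioo (0:ℝ) 1) (x : ℝ) :
    HasDerivAt (fun a' : ℝ => t ^ (a'-1) * (1-t) ^ (b-1))
      (Real.log t * (t ^ (x-1) * (1-t) ^ (b-1))) x := by
  have h1 : HasDerivAt (fun a' : ℝ => t ^ (a'-1)) (t ^ (x-1) * Real.log t) x := by
    have h0 := (Real.hasStrictDerivAt_const_rpow ht.1 (x-1)).hasDerivAt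
    have := h0.comp x ((hasDerivAt_id x).sub_const 1)
    simpa [Function.comp_def] using this
  have := h1.mul_const ((1-t) ^ (b-1))
  exact this.congr_deriv (by ring)

lemma hasDerivAt_Beta_left {a b : ℝ} (ha : 0 < a) (hb : 0 < b) :
    HasDerivAt (fun a' => Beta a' b)
      (∫ t in Ioo (0:ℝ) 1, Real.log t * (t ^ (a-1) * (1-t) ^ (b-1))) a := by
  have key := hasDerivAt_integral_of_dominated_loc_of_lip
    (F := fun a' t => t ^ (a'-1) * (1-t) ^ (b-1))
    (F' := fun t => Real.log t * (t ^ (a-1) * (1-t) ^ (b-1)))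
    (x₀ := a) (s := Metric.ball a (a/2))
    (bound := fun t => |Real.log t * (t ^ (a/2-1) * (1-t) ^ (b-1))|)
    (μ := volume.restrict (Ioo (0:ℝ) 1))
    (Metric.ball_mem_nhds a (by linarith))
    ?_ ?_ ?_ ?_ ?_ ?_
  · exact key.2
  · filter_upwards with x
    apply ContinuousOn.aestronglyMeasurable _ measurableSet_Ioo
    exact ((continuousOn_id.rpow_const fun t ht => Or.inl (ne_of_gt ht.1)).mul
        ((continuousOn_const.sub continuousOn_id).rpow_const
          fun t ht => Or.inl (sub_ne_zero.mpr ht.2.ne')))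
  · exact betaIntegrable ha hb
  · apply ContinuousOn.aestronglyMeasurable _ measurableSet_Ioo
    apply ContinuousOn.mul
    · exact Real.continuousOn_log.mono (fun t ht => ne_of_gt ht.1)
    · exact ((continuousOn_id.rpow_const fun t ht => Or.inl (ne_of_gt ht.1)).mul
        ((continuousOn_const.sub continuousOn_id).rpow_const
          fun t ht => Or.inl (sub_ne_zero.mpr ht.2.ne')))
  · rw [ae_restrict_iff' measurableSet_Ioo]
    filter_upwards with t ht
    apply Convex.lipschitzOnWith_of_nnnorm_hasDerivWithin_le (convex_ball a (a/2))
      (f' := fun x => Real.log t * (t ^ (x-1) * (1-t) ^ (b-1)))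
      (fun x _ => (hasDerivAt_F ht x).hasDerivWithinAt)
    intro x hx
    rw [Metric.mem_ball, Real.dist_eq, abs_lt] at hx
    have hx2 : a/2 < x := by linarith [hx.1]
    have h0 : (0:ℝ) < t := ht.1
    have h1t : (0:ℝ) ≤ (1-t) ^ (b-1) := Real.rpow_nonneg (by linarith [ht.2]) _
    rw [← NNReal.coe_le_coe, coe_nnnorm, Real.coe_nnabs, Real.norm_eq_abs]
    rw [abs_abs, abs_mul, abs_mul, abs_mul, abs_mul]
    apply mul_le_mul_of_nonneg_left _ (abs_nonneg _)
    apply mul_le_mul_of_nonneg_right _ (abs_nonneg _)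
    rw [abs_of_nonneg (Real.rpow_nonneg h0.le _), abs_of_nonneg (Real.rpow_nonneg h0.le _)]
    exact Real.rpow_le_rpow_of_exponent_ge h0 ht.2.le (by linarith)
  · exact (integrable_log_mul (by linarith : (0:ℝ) < a/2) hb).abs
  · rw [ae_restrict_iff' measurableSet_Ioo]
    filter_upwards with t ht
    exact hasDerivAt_F ht a

lemma Gamma_hasDerivAt {x : ℝ} (hx : 0 < x) :
    HasDerivAt Real.Gamma (digamma x * Real.Gamma x) x := by
  have hd : DifferentiableAt ℝ Real.Gamma x :=
    Real.differentiableAt_Gamma (fun m => by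
      have : (0:ℝ) ≤ m := Nat.cast_nonneg m
      intro h; rw [h] at hx; linarith)
  have hne : Real.Gamma x ≠ 0 := (Real.Gamma_pos_of_pos hx).ne'
  have hlog := (hd.hasDerivAt).log hne
  have hdig : digamma x = deriv Real.Gamma x / Real.Gamma x := hlog.deriv
  have : digamma x * Real.Gamma x = deriv Real.Gamma x := by
    rw [hdig]; field_simp
  rw [this]
  exact hd.hasDerivAt

lemma key_log_integral {a b : ℝ} (ha : 0 < a) (hb : 0 < b) :
    ∫ t in Ioo (0:ℝ) 1, Real.log t * (t ^ (a-1) * (1-t) ^ (b-1))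
      = Beta a b * (digamma a - digamma (a+b)) := by
  have hab : (0:ℝ) < a + b := by linarith
  have hne : Real.Gamma (a+b) ≠ 0 := (Real.Gamma_pos_of_pos hab).ne'
  have h1 := Gamma_hasDerivAt ha
  have h2 := Gamma_hasDerivAt hab
  have hcomp : HasDerivAt (fun a' => Real.Gamma (a'+b))
      (digamma (a+b) * Real.Gamma (a+b)) a := by
    have := h2.comp a ((hasDerivAt_id a).add_const b)
    simpa [Function.comp_def] using this
  have hG := (h1.mul_const (Real.Gamma b)).div hcomp hne
  have hD : (digamma a * Real.Gamma a * Real.Gamma b * Real.Gamma (a+b)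
      - Real.Gamma a * Real.Gamma b * (digamma (a+b) * Real.Gamma (a+b)))
        / (Real.Gamma (a+b)) ^ 2
      = Beta a b * (digamma a - digamma (a+b)) := by
    rw [Beta_eq_Gamma ha hb]
    field_simp
  rw [hD] at hG
  have heq : (fun a' => Beta a' b)
      =ᶠ[nhds a] (fun a' => Real.Gamma a' * Real.Gamma b / Real.Gamma (a'+b)) :=
    Filter.eventuallyEq_of_mem (Ioi_mem_nhds ha) (fun a' ha' => Beta_eq_Gamma ha' hb)
  have hB : HasDerivAt (fun a' => Beta a' b)
      (Beta a b * (digamma a - digamma (a+b))) a :=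
    heq.hasDerivAt_iff.mpr hG
  exact (hasDerivAt_Beta_left ha hb).unique hB

lemma Beta_symm (a b : ℝ) : Beta a b = Beta b a := by
  have h := reflect_integral (fun t : ℝ => t ^ (b-1) * (1-t) ^ (a-1))
  simp only [sub_sub_cancel] at h
  unfold Beta
  rw [← h]
  congr 1
  funext t
  ring

lemma key_diff {a b : ℝ} (ha : 0 < a) (hb : 0 < b) :
    ∫ t in Ioo (0:ℝ) 1, (Real.log t - Real.log (1-t)) * (t ^ (a-1) * (1-t) ^ (b-1))
      = Beta a b * (digamma a - digamma b) := by
  have hsplit : ∫ t in Ioo (0:ℝ) 1, (Real.log t - Real.log (1-t)) * (t ^ (a-1) * (1-t) ^ (b-1))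
      = (∫ t in Ioo (0:ℝ) 1, Real.log t * (t ^ (a-1) * (1-t) ^ (b-1)))
        - ∫ t in Ioo (0:ℝ) 1, Real.log (1-t) * (t ^ (a-1) * (1-t) ^ (b-1)) := by
    rw [← integral_sub (integrable_log_mul ha hb) (integrable_log_one_sub_mul ha hb)]
    congr 1; funext t; ring
  have hrefl : ∫ t in Ioo (0:ℝ) 1, Real.log (1-t) * (t ^ (a-1) * (1-t) ^ (b-1))
      = ∫ t in Ioo (0:ℝ) 1, Real.log t * (t ^ (b-1) * (1-t) ^ (a-1)) := by
    have h := reflect_integral (fun t : ℝ => Real.log t * (t ^ (b-1) * (1-t) ^ (a-1)))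
    simp only [sub_sub_cancel] at h
    rw [← h]
    congr 1; funext t; ring
  rw [hsplit, hrefl, key_log_integral ha hb, key_log_integral hb ha, Beta_symm b a,
    add_comm b a]
  ring

lemma phi_image : (fun t : ℝ => t/(1-t)) '' Ioo (0:ℝ) 1 = Ioi (0:ℝ) := by
  ext u
  constructor
  · rintro ⟨t, ht, rfl⟩
    exact div_pos ht.1 (by linarith [ht.2])
  · intro hu
    refine ⟨u/(1+u), ⟨div_pos hu (by linarith [mem_Ioi.mp hu]), ?_⟩, ?_⟩
    · rw [div_lt_one (by linarith [mem_Ioi.mp hu])]; linarith [mem_Ioi.mp hu]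
    · have h1u : (0:ℝ) < 1 + u := by linarith [mem_Ioi.mp hu]
      field_simp
      ring

lemma subst_phi {a s : ℝ} (ha : 0 < a) (hbs : 0 < s - a) :
    (∫ u in Ioi (0:ℝ), Real.log u * u ^ (a-1) / (1+u) ^ s)
      = ∫ t in Ioo (0:ℝ) 1, (Real.log t - Real.log (1-t)) * (t ^ (a-1) * (1-t) ^ (s-a-1)) := by
  have hderiv : ∀ t ∈ Ioo (0:ℝ) 1,
      HasDerivWithinAt (fun t : ℝ => t/(1-t)) (((1-t)^2)⁻¹) (Ioo (0:ℝ) 1) t := by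
    intro t ht
    have h1t : (1:ℝ) - t ≠ 0 := by intro h; rw [sub_eq_zero] at h; exact absurd h.symm (ne_of_lt ht.2)
    have := (hasDerivAt_id t).div ((hasDerivAt_const t 1).sub (hasDerivAt_id t)) h1t
    exact this.hasDerivWithinAt.congr_deriv (by simp only [Pi.sub_apply, id]; field_simp; ring)
  have hinj : InjOn (fun t : ℝ => t/(1-t)) (Ioo (0:ℝ) 1) := by
    intro t ht t' ht' h
    have h1 : (0:ℝ) < 1 - t := by linarith [ht.2]
    have h2 : (0:ℝ) < 1 - t' := by linarith [ht'.2]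
    simp only at h
    rw [div_eq_div_iff h1.ne' h2.ne'] at h
    nlinarith [h]
  rw [← phi_image, integral_image_eq_integral_abs_deriv_smul measurableSet_Ioo hderiv hinj]
  apply setIntegral_congr_fun measurableSet_Ioo
  intro t ht
  have h0 : (0:ℝ) < t := ht.1
  have h1t : (0:ℝ) < 1 - t := by linarith [ht.2]
  have hlog : Real.log (t/(1-t)) = Real.log t - Real.log (1-t) :=
    Real.log_div h0.ne' h1t.ne'
  have hpow : (t/(1-t)) ^ (a-1) = t ^ (a-1) / (1-t) ^ (a-1) :=
    Real.div_rpow h0.le h1t.le _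
  have hden : (1 + t/(1-t)) = (1-t)⁻¹ := by field_simp; ring
  have hdenpow : ((1-t)⁻¹ : ℝ) ^ s = ((1-t) ^ s)⁻¹ := Real.inv_rpow h1t.le s
  simp only [smul_eq_mul, hlog, hpow, hden, hdenpow]
  rw [abs_of_pos (by positivity : (0:ℝ) < ((1-t)^2)⁻¹)]
  have hsplit : (1-t) ^ (s-a-1) = (1-t) ^ s * ((1-t) ^ (a-1))⁻¹ * (((1-t):ℝ) ^ (2:ℝ))⁻¹ := by
    rw [← Real.rpow_neg h1t.le, ← Real.rpow_neg h1t.le, ← Real.rpow_add h1t,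
      ← Real.rpow_add h1t]
    congr 1; ring
  have h2 : ((1-t):ℝ) ^ (2:ℝ) = ((1-t):ℝ) ^ (2:ℕ) := by
    rw [← Real.rpow_natCast]; norm_num
  rw [h2] at hsplit
  rw [hsplit]
  have e1 : ((1-t):ℝ) ^ (a-1) ≠ 0 := (Real.rpow_pos_of_pos h1t _).ne'
  have e2 : ((1-t):ℝ) ^ s ≠ 0 := (Real.rpow_pos_of_pos h1t _).ne'
  have e3 : ((1-t):ℝ) ^ (2:ℕ) ≠ 0 := pow_ne_zero _ h1t.ne'
  field_simp

lemma f_image {α β : ℝ} (hα : 0 < α) (hβ : 0 < β) :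
    (fun x : ℝ => (x/α) ^ β) '' Ioi (0:ℝ) = Ioi (0:ℝ) := by
  ext u
  constructor
  · rintro ⟨x, hx, rfl⟩
    exact Real.rpow_pos_of_pos (div_pos hx hα) β
  · intro hu
    have hu' : (0:ℝ) < u := hu
    refine ⟨α * u ^ (1/β), mul_pos hα (Real.rpow_pos_of_pos hu' _), ?_⟩
    have : α * u ^ (1/β) / α = u ^ (1/β) := by field_simp
    simp only [this]
    rw [← Real.rpow_mul hu'.le, one_div_mul_cancel hβ.ne', Real.rpow_one]

lemma subst_x {α β m s : ℝ} (hα : 0 < α) (hβ : 0 < β) :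
    (∫ x in Ioi (0:ℝ), Real.log ((x/α) ^ β) * ((x/α) ^ β) ^ m / (1 + (x/α) ^ β) ^ s)
      = (α/β) * ∫ u in Ioi (0:ℝ), Real.log u * u ^ (m + 1/β - 1) / (1+u) ^ s := by
  have hderiv : ∀ x ∈ Ioi (0:ℝ),
      HasDerivWithinAt (fun x : ℝ => (x/α) ^ β) (β/α * (x/α) ^ (β-1)) (Ioi (0:ℝ)) x := by
    intro x hx
    have hx' : (0:ℝ) < x := hx
    have h1 := Real.hasDerivAt_rpow_const (x := x/α) (p := β) (Or.inl (div_pos hx' hα).ne')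
    have h2 := h1.comp x ((hasDerivAt_id x).div_const α)
    simp only [Function.comp_def, id] at h2
    exact h2.hasDerivWithinAt.congr_deriv (by ring)
  have hinj : InjOn (fun x : ℝ => (x/α) ^ β) (Ioi (0:ℝ)) := by
    have : StrictMonoOn (fun x : ℝ => (x/α) ^ β) (Ioi (0:ℝ)) := by
      intro x hx y hy hxy
      exact Real.rpow_lt_rpow (div_nonneg (le_of_lt hx) hα.le)
        (div_lt_div_of_pos_right hxy hα) hβ
    exact this.injOn
  conv_rhs => rw [show Ioi (0:ℝ) = (fun x : ℝ => (x/α) ^ β) '' Ioi (0:ℝ) from (f_image hα hβ).symm,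
    integral_image_eq_integral_abs_deriv_smul measurableSet_Ioi hderiv hinj,
    ← integral_const_mul]
  apply setIntegral_congr_fun measurableSet_Ioi
  intro x hx
  have hx' : (0:ℝ) < x := hx
  have hy : (0:ℝ) < x/α := div_pos hx' hα
  have hrp : (0:ℝ) < (x/α) ^ β := Real.rpow_pos_of_pos hy β
  have habs : |β/α * (x/α) ^ (β-1)| = β/α * (x/α) ^ (β-1) :=
    abs_of_pos (mul_pos (div_pos hβ hα) (Real.rpow_pos_of_pos hy _))
  simp only [smul_eq_mul, habs]
  have hpow : ((x/α) ^ β) ^ (m + 1/β - 1) = (x/α) ^ (β * (m + 1/β - 1)) :=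
    (Real.rpow_mul hy.le _ _).symm
  have hpow2 : ((x/α) ^ β) ^ m = (x/α) ^ (β * m) := (Real.rpow_mul hy.le _ _).symm
  rw [hpow]
  have hcomb2 : (x/α) ^ (β-1) * (x/α) ^ (m*β+1-β) = ((x/α) ^ β) ^ m := by
    rw [← Real.rpow_add hy, hpow2]
    congr 1
    ring
  field_simp
  rw [← hcomb2]
  ring

theorem log_beta_integral_substituted (α β m s : ℝ) (hα : 0 < α) (hβ : 0 < β)
    (hm : 0 < m + 1/β) (hs : 0 < s - m - 1/β) :
    (∫ x in Ioi (0:ℝ), Real.log ((x/α) ^ β) * ((x/α) ^ β) ^ m / (1 + (x/α) ^ β) ^ s)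
      = (α/β) * Beta (s - m - 1/β) (m + 1/β)
          * (digamma (m + 1/β) - digamma (s - m - 1/β)) := by
  have hb : 0 < s - (m + 1/β) := by linarith
  rw [subst_x hα hβ, subst_phi hm hb, key_diff hm hb, Beta_symm,
    show s - (m + 1/β) = s - m - 1/β by ring]
  ring
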